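/- Let x be a minimal absent word of length m ≥ 2 of a word y of length n, and let SA and LCP be the suffix array and LCP array of y. Then there exists an index i ∈ [0, n-1] such that the longest proper suffix x₁ = x[1..m-1] of x satisfies x₁ = y[SA[i] .. SA[i]+LCP[i]] or x₁ = y[SA[i] .. SA[i]+LCP[i+1]] (indices taken inclusively; i.e., x₁ is the prefix of the suffix y[SA[i]..n-1] of length LCP[i]+1 or of length LCP[i+1]+1). -/

import Mathlib

/-- `x` is a factor (contiguous subword) of `y` iff `x <:+: y` (`List.IsInfix`).
A minimal absent word of `y`: a word of length at least 2 that is not a factor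
of `y` but all of whose proper factors are factors of `y`. -/
def MinimalAbsentWord {α : Type*} (y x : List α) : Prop :=
  2 ≤ x.length ∧ ¬ x <:+: y ∧ ∀ f : List α, f <:+: x → f ≠ x → f <:+: y

/-- The length of the longest common prefix of two words. -/
def lcpLen {α : Type*} [DecidableEq α] : List α → List α → ℕ
  | a :: s, b :: t => if a = b then lcpLen s t + 1 else 0
  | _, _ => 0

/-- If `p` is a prefix of `u` and of `w`, and `u ≤ v ≤ w` in the lexicographic
order, then `p` is a prefix of `v` as well. -/
private lemma prefix_of_between {α : Type*} [LinearOrder α] (p : List α) :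
    ∀ {u v w : List α}, p <+: u → p <+: w → ¬ v < u → ¬ w < v → p <+: v := by
  induction p with
  | nil => intro u v w _ _ _ _; exact List.nil_prefix
  | cons a p ih =>
    intro u v w hu hw hvu hwv
    obtain ⟨su, rfl⟩ := hu
    obtain ⟨sw, rfl⟩ := hw
    match v with
    | [] =>
      exact absurd (show ([] : List α) < (a :: p) ++ su by
        rw [List.cons_append]; exact List.nil_lt_cons _ _) hvu
    | b :: v' =>
      have hba : ¬ b < a := fun hlt => hvu (show List.Lex (· < ·) (b :: v') ((a :: p) ++ su) by
        rw [List.cons_append]; exact List.Lex.rel hlt)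
      have hab : ¬ a < b := fun hlt => hwv (show List.Lex (· < ·) ((a :: p) ++ sw) (b :: v') by
        rw [List.cons_append]; exact List.Lex.rel hlt)
      have heq : a = b := le_antisymm (not_lt.1 hba) (not_lt.1 hab)
      subst heq
      have h1 : ¬ v' < p ++ su := fun hlt =>
        hvu (show List.Lex (· < ·) (a :: v') ((a :: p) ++ su) by
          rw [List.cons_append]; exact List.Lex.cons hlt)
      have h2 : ¬ p ++ sw < v' := fun hlt =>
        hwv (show List.Lex (· < ·) ((a :: p) ++ sw) (a :: v') by
          rw [List.cons_append]; exact List.Lex.cons hlt)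
      exact List.cons_prefix_cons.2
        ⟨rfl, ih (List.prefix_append p su) (List.prefix_append p sw) h1 h2⟩

private lemma le_lcpLen {α : Type*} [DecidableEq α] (p : List α) :
    ∀ {u v : List α}, p <+: u → p <+: v → p.length ≤ lcpLen u v := by
  induction p with
  | nil => simp
  | cons a p ih =>
    intro u v hu hv
    obtain ⟨su, rfl⟩ := hu
    obtain ⟨sv, rfl⟩ := hv
    rw [List.cons_append, List.cons_append]
    simp only [lcpLen, if_pos rfl, List.length_cons]
    exact Nat.succ_le_succ (ih (List.prefix_append p su) (List.prefix_append p sv))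

private lemma take_lcpLen {α : Type*} [DecidableEq α] :
    ∀ (u v : List α), u.take (lcpLen u v) = v.take (lcpLen u v)
  | [], v => by simp [lcpLen]
  | a :: u, [] => by simp [lcpLen]
  | a :: u, b :: v => by
    by_cases h : a = b
    · subst h
      simp [lcpLen, List.take_succ_cons, take_lcpLen u v]
    · simp [lcpLen, h]

private lemma lcpLen_comm {α : Type*} [DecidableEq α] :
    ∀ (u v : List α), lcpLen u v = lcpLen v u
  | [], [] => rfl
  | [], _ :: _ => rfl
  | _ :: _, [] => rfl
  | a :: u, b :: v => by
    by_cases h : a = b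
    · subst h; simp [lcpLen, lcpLen_comm u v]
    · simp [lcpLen, h, Ne.symm h]

/-- If `t.dropLast` is a prefix of `u`, `t` is a prefix of `v` but not of `u`,
then the lcp length of `u` and `v` is `t.length - 1`. -/
private lemma lcp_eq_of {α : Type*} [DecidableEq α] {t u v : List α}
    (ht : t ≠ []) (hwu : t.dropLast <+: u) (htv : t <+: v) (hnu : ¬ t <+: u) :
    lcpLen u v = t.length - 1 := by
  have hwv : t.dropLast <+: v := (List.dropLast_prefix t).trans htv
  have hlow : t.length - 1 ≤ lcpLen u v := by
    have := le_lcpLen t.dropLast hwu hwv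
    rwa [List.length_dropLast] at this
  have hup : lcpLen u v ≤ t.length - 1 := by
    by_contra hcon
    push_neg at hcon
    have htl : 1 ≤ t.length := List.length_pos_iff.2 ht
    have hge : t.length ≤ lcpLen u v := by omega
    have hteq : v.take t.length = t := (List.prefix_iff_eq_take.1 htv).symm
    have h1 : u.take t.length = v.take t.length := by
      have h2 := take_lcpLen u v
      calc u.take t.length = (u.take (lcpLen u v)).take t.length := by
            rw [List.take_take, inf_eq_left.2 hge]
        _ = (v.take (lcpLen u v)).take t.length := by rw [h2]
        _ = v.take t.length := by rw [List.take_take, inf_eq_left.2 hge]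
    exact hnu (by rw [← hteq, ← h1]; exact List.take_prefix _ _)
  omega

/-- Lemma 2: the longest proper suffix `x.tail` of a minimal absent word `x`
equals the prefix of length `LCP[i] + 1` or `LCP[i+1] + 1` of the suffix
`y[SA[i]..n-1]`, for some index `i`. -/
theorem stmt_12 {α : Type*} [LinearOrder α] (y x : List α)
    (h : MinimalAbsentWord y x)
    (SA LCP : ℕ → ℕ)
    (hSA : ∀ r < y.length, SA r < y.length)
    (hSAinj : ∀ r < y.length, ∀ s < y.length, SA r = SA s → r = s)
    (hsorted : ∀ r s : ℕ, r < s → s < y.length → y.drop (SA r) < y.drop (SA s))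
    (hLCP0 : LCP 0 = 0) (hLCPn : LCP y.length = 0)
    (hLCP : ∀ r, 1 ≤ r → r < y.length →
      LCP r = lcpLen (y.drop (SA (r - 1))) (y.drop (SA r))) :
    ∃ i < y.length,
      x.tail = (y.drop (SA i)).take (LCP i + 1) ∨
      x.tail = (y.drop (SA i)).take (LCP (i + 1) + 1) := by
  obtain ⟨hm, hxy, hfac⟩ := h
  obtain ⟨a, b, l, rfl⟩ : ∃ a b l, x = a :: b :: l := by
    match x, hm with
    | a :: b :: l, _ => exact ⟨a, b, l, rfl⟩
  simp only [List.tail_cons]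
  set w := (b :: l).dropLast with hw
  have hwlen : w.length = l.length := by simp [hw]
  have tnil : (b :: l : List α) ≠ [] := by simp
  have tlen : (b :: l : List α).length = l.length + 1 := by simp
  -- the tail is a factor of y
  have ht_y : (b :: l) <:+: y :=
    hfac _ ⟨[a], [], by simp⟩ (by intro hcon; have := congrArg List.length hcon; simp at this)
  -- the dropLast is a factor of y
  have hd_y : (a :: w) <:+: y := by
    have hinf : (a :: b :: l).dropLast <:+: (a :: b :: l) := (List.dropLast_prefix _).isInfix
    have hne : (a :: b :: l).dropLast ≠ (a :: b :: l) := by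
      intro hcon
      have := congrArg List.length hcon
      simp at this
    have hf := hfac _ hinf hne
    rwa [List.dropLast_cons₂] at hf
  -- occurrence of b :: l at position k
  obtain ⟨s1, s2, hy1⟩ := ht_y
  have hyk : y.drop s1.length = (b :: l) ++ s2 := by
    rw [← hy1, List.append_assoc]; exact List.drop_left
  have htk : (b :: l) <+: y.drop s1.length := ⟨s2, hyk.symm⟩
  have hkn : s1.length < y.length := by
    have := congrArg List.length hy1
    simp [List.length_append] at this
    omega
  -- occurrence of a :: w at position j
  obtain ⟨s3, s4, hy2⟩ := hd_y
  have hyj : y.drop s3.length = (a :: w) ++ s4 := by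
    rw [← hy2, List.append_assoc]; exact List.drop_left
  have hjn : s3.length + 1 ≤ y.length := by
    have := congrArg List.length hy2
    simp [List.length_append] at this
    omega
  have hA : y.drop (s3.length + 1) = w ++ s4 := by
    rw [← List.tail_drop, hyj]; rfl
  have hwA : w <+: y.drop (s3.length + 1) := ⟨s4, hA.symm⟩
  have hnotA : ¬ (b :: l) <+: y.drop (s3.length + 1) := by
    rintro ⟨s5, h5⟩
    apply hxy
    have hxd : y.drop s3.length = (a :: b :: l) ++ s5 := by
      calc y.drop s3.length = a :: (w ++ s4) := by rw [hyj]; rfl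
        _ = a :: ((b :: l) ++ s5) := by rw [← hA, ← h5]
        _ = (a :: b :: l) ++ s5 := rfl
    exact (List.IsPrefix.isInfix ⟨s5, hxd.symm⟩).trans (List.drop_suffix s3.length y).isInfix
  -- surjectivity of SA on [0, n)
  have hsurj : ∀ p, p < y.length → ∃ r, r < y.length ∧ SA r = p := by
    intro p hp
    have hinj : Function.Injective
        (fun r : Fin y.length => (⟨SA r, hSA r r.2⟩ : Fin y.length)) := by
      intro r s hrs
      exact Fin.ext (hSAinj r r.2 s s.2 (by simpa using congrArg Fin.val hrs))
    obtain ⟨r, hr⟩ := (Finite.injective_iff_surjective.1 hinj) ⟨p, hp⟩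
    exact ⟨r.1, r.2, by simpa using congrArg Fin.val hr⟩
  -- comparison facts
  have hnlt : ∀ r s, r ≤ s → s < y.length →
      ¬ y.drop (SA s) < y.drop (SA r) := by
    intro r s hrs hsn hcon
    rcases eq_or_lt_of_le hrs with rfl | hlt
    · exact lt_irrefl _ hcon
    · exact lt_asymm (hsorted r s hlt hsn) hcon
  classical
  -- ranks of suffixes having b :: l as a prefix
  set S : Finset ℕ :=
    (Finset.range y.length).filter (fun r => (b :: l) <+: y.drop (SA r)) with hS
  have hmemS : ∀ r, r ∈ S ↔ r < y.length ∧ (b :: l) <+: y.drop (SA r) := by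
    intro r; simp [hS]
  obtain ⟨rk, hrkn, hrkSA⟩ := hsurj s1.length hkn
  have hSne : S.Nonempty := ⟨rk, (hmemS rk).2 ⟨hrkn, hrkSA ▸ htk⟩⟩
  set r0 := S.min' hSne with hr0
  set r1 := S.max' hSne with hr1
  have hr0S : r0 ∈ S := S.min'_mem hSne
  have hr1S : r1 ∈ S := S.max'_mem hSne
  have hr0n : r0 < y.length := ((hmemS r0).1 hr0S).1
  have hr0t : (b :: l) <+: y.drop (SA r0) := ((hmemS r0).1 hr0S).2
  have hr1n : r1 < y.length := ((hmemS r1).1 hr1S).1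
  have hr1t : (b :: l) <+: y.drop (SA r1) := ((hmemS r1).1 hr1S).2
  -- the two generic constructions
  have keymin : 1 ≤ r0 → w <+: y.drop (SA (r0 - 1)) →
      ∃ i < y.length,
        (b :: l) = (y.drop (SA i)).take (LCP i + 1) ∨
        (b :: l) = (y.drop (SA i)).take (LCP (i + 1) + 1) := by
    intro h1 hpre
    have hnot : ¬ (b :: l) <+: y.drop (SA (r0 - 1)) := by
      intro hcon
      have hmem : r0 - 1 ∈ S := (hmemS _).2 ⟨by omega, hcon⟩
      have := S.min'_le _ hmem
      omega
    have hlcp : lcpLen (y.drop (SA (r0 - 1))) (y.drop (SA r0)) = l.length := by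
      have := lcp_eq_of tnil (hw ▸ hpre) hr0t hnot
      simpa [tlen] using this
    refine ⟨r0, hr0n, Or.inl ?_⟩
    rw [hLCP r0 h1 hr0n, hlcp]
    have := (List.prefix_iff_eq_take.1 hr0t)
    simpa [tlen] using this
  have keymax : r1 + 1 < y.length → w <+: y.drop (SA (r1 + 1)) →
      ∃ i < y.length,
        (b :: l) = (y.drop (SA i)).take (LCP i + 1) ∨
        (b :: l) = (y.drop (SA i)).take (LCP (i + 1) + 1) := by
    intro h3 hpre
    have hnot : ¬ (b :: l) <+: y.drop (SA (r1 + 1)) := by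
      intro hcon
      have hmem : r1 + 1 ∈ S := (hmemS _).2 ⟨h3, hcon⟩
      have := S.le_max' _ hmem
      omega
    have hlcp : lcpLen (y.drop (SA r1)) (y.drop (SA (r1 + 1))) = l.length := by
      rw [lcpLen_comm]
      have := lcp_eq_of tnil (hw ▸ hpre) hr1t hnot
      simpa [tlen] using this
    refine ⟨r1, hr1n, Or.inr ?_⟩
    rw [hLCP (r1 + 1) (by omega) h3]
    simp only [Nat.add_sub_cancel]
    rw [hlcp]
    have := (List.prefix_iff_eq_take.1 hr1t)
    simpa [tlen] using this
  have hwbl : w <+: (b :: l) := hw ▸ List.dropLast_prefix (b :: l)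
  by_cases hj1 : s3.length + 1 = y.length
  · -- the suffix following the occurrence of a :: w is empty, so m = 2
    have hwnil : w = [] := by
      have h0 : y.drop (s3.length + 1) = [] := by rw [hj1]; exact List.drop_length
      rw [h0] at hA
      exact (List.append_eq_nil_iff.1 hA.symm).1
    have hl : l = [] := by
      have := hwlen
      rw [hwnil] at this
      exact List.length_eq_zero_iff.1 (by simpa using this.symm)
    subst hl
    by_cases h0 : r0 = 0
    · refine ⟨0, by omega, Or.inl ?_⟩
      rw [hLCP0]
      have h1 : (b :: ([] : List α)) <+: y.drop (SA 0) := h0 ▸ hr0t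
      simpa using List.prefix_iff_eq_take.1 h1
    · exact keymin (by omega) (hwnil ▸ List.nil_prefix)
  · -- the suffix A = y.drop (s3.length + 1) is nonempty and has a rank sA
    have hj1' : s3.length + 1 < y.length := by omega
    obtain ⟨sA, hsAn, hsAeq⟩ := hsurj (s3.length + 1) hj1'
    have hwsA : w <+: y.drop (SA sA) := hsAeq ▸ hwA
    have hnotsA : ¬ (b :: l) <+: y.drop (SA sA) := hsAeq ▸ hnotA
    by_cases hc1 : sA < r0
    · -- A comes strictly before all suffixes with prefix b :: l
      have h1 : 1 ≤ r0 := by omega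
      have hpre : w <+: y.drop (SA (r0 - 1)) :=
        prefix_of_between w hwsA (hwbl.trans hr0t)
          (hnlt sA (r0 - 1) (by omega) (by omega))
          (hnlt (r0 - 1) r0 (by omega) hr0n)
      exact keymin h1 hpre
    · by_cases hc2 : r1 < sA
      · -- A comes strictly after all suffixes with prefix b :: l
        have h3 : r1 + 1 < y.length := by omega
        have hpre : w <+: y.drop (SA (r1 + 1)) :=
          prefix_of_between w (hwbl.trans hr1t) hwsA
            (hnlt r1 (r1 + 1) (by omega) h3)
            (hnlt (r1 + 1) sA (by omega) hsAn)
        exact keymax h3 hpre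
      · -- impossible: A would lie between two suffixes with prefix b :: l
        exfalso
        exact hnotsA (prefix_of_between (b :: l) hr0t hr1t
          (hnlt r0 sA (by omega) hsAn)
          (hnlt sA r1 (by omega) hr1n))
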